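/- Let μ ≥ 0 and let f : V → ℝ be differentiable and μ-convex with global minimizer x*. Let γ₀ > 0, x₀, v₀ ∈ V, let (α_k) be positive step sizes with β_k = α_k/γ_k, and let (x_k, v_k, γ_k) be generated by the semi-implicit scheme: (x_{k+1} - x_k)/α_k = v_k - x_{k+1} - β_k∇f(x_{k+1}), (v_{k+1} - v_k)/α_k = (μ/γ_k)(x_{k+1} - v_{k+1}) - (1/γ_k)∇f(x_{k+1}), (γ_{k+1} - γ_k)/α_k = μ - γ_{k+1}. Define λ₀ = 1, λ_k = ∏_{i=0}^{k-1} 1/(1+α_i) and L_k = f(x_k) - f(x*) + (γ_k/2)‖v_k - x*‖². Then for every k ≥ 0, L_k + (λ_k/2)·∑_{i=0}^{k-1} (α_i²/(λ_iγ_i))‖∇f(x_{i+1})‖² ≤ λ_k·L₀. -/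

import Mathlib

open scoped RealInnerProductSpace


lemma cert_lemma (a γ μ fx fp fs I1 I2 A B C D E F Dsq Wsq : ℝ)
    (ha : 0 < a) (hγ : 0 < γ) (hμ : 0 ≤ μ)
    (hC1 : fx - fp - I1 ≥ μ/2 * Dsq)
    (hC2 : fs - fp - I2 ≥ μ/2 * B)
    (e1 : γ * I1 = -(a*γ)*E + (a*γ)*F + a^2*C)
    (e2 : I2 = -F)
    (hW : (γ+a*μ)^2 * Wsq = γ^2*A + a^2*μ^2*B + a^2*C + 2*a*μ*γ*D - 2*a*γ*E - 2*a^2*μ*F)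
    (hD : γ^2 * Dsq = a^2*γ^2*(A - 2*D + B) - 2*a^3*γ*(E-F) + a^4*C)
    (hDpos : 0 ≤ Dsq) (hBpos : 0 ≤ B) :
    2*(γ+a*μ)*a*γ^2*(1+a)*(fp - fs) + a*γ^2*((γ+a*μ)^2*Wsq) + (γ+a*μ)*a^3*γ*C
      ≤ 2*(γ+a*μ)*a*γ^2*(fx - fs) + (γ+a*μ)*a*γ^3*A := by
  have hs : 0 < γ + a*μ := by positivity
  have m1 : (0:ℝ) ≤ 2*(γ+a*μ)*a*γ^2 := by positivity
  have m2 : (0:ℝ) ≤ 2*(γ+a*μ)*a^2*γ^2 := by positivity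
  have k1 : 2*(γ+a*μ)*a*γ^2*(μ/2*Dsq) ≤ 2*(γ+a*μ)*a*γ^2*(fx - fp - I1) :=
    mul_le_mul_of_nonneg_left hC1 m1
  have k2 : 2*(γ+a*μ)*a^2*γ^2*(μ/2*B) ≤ 2*(γ+a*μ)*a^2*γ^2*(fs - fp - I2) :=
    mul_le_mul_of_nonneg_left hC2 m2
  have k3 : 0 ≤ (a*(γ+a*μ)*μ + μ*γ)*(γ^2*Dsq) := by positivity
  have main : 2*(γ+a*μ)*a*γ^2*(fx - fs) + (γ+a*μ)*a*γ^3*A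
      - (2*(γ+a*μ)*a*γ^2*(1+a)*(fp - fs) + a*γ^2*((γ+a*μ)^2*Wsq) + (γ+a*μ)*a^3*γ*C)
      = 2*(γ+a*μ)*a*γ^2*(fx - fp - I1 - μ/2*Dsq)
        + 2*(γ+a*μ)*a^2*γ^2*(fs - fp - I2 - μ/2*B)
        + (a*(γ+a*μ)*μ + μ*γ)*(γ^2*Dsq) := by
    linear_combination (-(a*γ^2)) * hW + (-(μ*γ)) * hD + (2*(γ+a*μ)*a*γ) * e1
      + (2*(γ+a*μ)*a^2*γ^2) * e2
  linarith

lemma expand_sq {V : Type*} [NormedAddCommGroup V] [InnerProductSpace ℝ V]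
    (c1 c2 c3 : ℝ) (u p g : V) :
    ‖c1 • u + c2 • p - c3 • g‖^2
      = c1^2*‖u‖^2 + c2^2*‖p‖^2 + c3^2*‖g‖^2
        + 2*c1*c2*⟪u,p⟫ - 2*c1*c3*⟪u,g⟫ - 2*c2*c3*⟪p,g⟫ := by
  rw [← real_inner_self_eq_norm_sq]
  simp only [inner_sub_left, inner_sub_right, inner_add_left, inner_add_right,
    real_inner_smul_left, real_inner_smul_right]
  simp only [real_inner_self_eq_norm_sq]
  rw [real_inner_comm p u, real_inner_comm g u, real_inner_comm g p]
  ring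

lemma step_lemma {V : Type*} [NormedAddCommGroup V] [InnerProductSpace ℝ V]
    (μ a γ : ℝ) (hμ : 0 ≤ μ) (ha : 0 < a) (hγ : 0 < γ)
    (f : V → ℝ) (f' : V → V)
    (hconv : ∀ z w : V, f z - f w - ⟪f' w, z - w⟫ ≥ μ / 2 * ‖z - w‖ ^ 2)
    (xstar xk xp vk vp : V)
    (hx : γ • (xp - xk) = (a*γ) • (vk - xp) - (a^2) • f' xp)
    (hv : (γ + a*μ) • (vp - xstar)
        = γ • (vk - xstar) + (a*μ) • (xp - xstar) - a • f' xp) :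
    2*(γ+a*μ)*a*γ^2*(1+a)*(f xp - f xstar) + a*γ^2*((γ+a*μ)^2*‖vp - xstar‖^2)
      + (γ+a*μ)*a^3*γ*‖f' xp‖^2
    ≤ 2*(γ+a*μ)*a*γ^2*(f xk - f xstar) + (γ+a*μ)*a*γ^3*‖vk - xstar‖^2 := by
  set u := vk - xstar with hu
  set p := xp - xstar with hp
  set g := f' xp with hg
  have hC1 : f xk - f xp - ⟪g, xk - xp⟫ ≥ μ/2 * ‖xk - xp‖^2 := by
    have := hconv xk xp; simpa using this
  have hC2 : f xstar - f xp - ⟪g, xstar - xp⟫ ≥ μ/2 * ‖p‖^2 := by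
    have := hconv xstar xp
    rwa [show ‖xstar - xp‖ = ‖p‖ by rw [hp, norm_sub_rev]] at this
  have e2 : ⟪g, xstar - xp⟫ = -⟪p,g⟫ := by
    rw [show xstar - xp = -p by rw [hp]; abel, inner_neg_right, real_inner_comm]
  have hx' : γ • (xk - xp) = (-(a*γ)) • u + (a*γ) • p - (-(a^2)) • g := by
    have h : γ • (xk - xp) = -(γ • (xp - xk)) := by rw [← smul_neg, neg_sub]
    rw [h, hx, hu, hp]
    module
  have e1 : γ * ⟪g, xk - xp⟫ = -(a*γ)*⟪u,g⟫ + (a*γ)*⟪p,g⟫ + a^2*‖g‖^2 := by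
    rw [← real_inner_smul_right, hx']
    simp only [inner_sub_right, inner_add_right, real_inner_smul_right,
      real_inner_self_eq_norm_sq]
    rw [real_inner_comm g u, real_inner_comm g p]
    ring
  have hD : γ^2 * ‖xk - xp‖^2
      = a^2*γ^2*(‖u‖^2 - 2*⟪u,p⟫ + ‖p‖^2) - 2*a^3*γ*(⟪u,g⟫-⟪p,g⟫) + a^4*‖g‖^2 := by
    have h := expand_sq (-(a*γ)) (a*γ) (-(a^2)) u p g
    rw [← hx', norm_smul, mul_pow, Real.norm_eq_abs, sq_abs] at h
    rw [h]; ring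
  have hv' : (γ + a*μ) • (vp - xstar) = γ • u + (a*μ) • p - a • g := by
    rw [hv, hu, hp]
  have hW : (γ+a*μ)^2 * ‖vp - xstar‖^2
      = γ^2*‖u‖^2 + a^2*μ^2*‖p‖^2 + a^2*‖g‖^2
        + 2*a*μ*γ*⟪u,p⟫ - 2*a*γ*⟪u,g⟫ - 2*a^2*μ*⟪p,g⟫ := by
    have h := expand_sq γ (a*μ) a u p g
    rw [← hv', norm_smul, mul_pow, Real.norm_eq_abs, sq_abs] at h
    rw [h]; ring
  exact cert_lemma a γ μ (f xk) (f xp) (f xstar) _ _ _ _ _ _ _ _ _ _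
    ha hγ hμ hC1 hC2 e1 e2 hW hD (by positivity) (by positivity)

/-- Convergence of the semi-implicit scheme for the H-NAG flow (with `β_k = α_k/γ_k`):
`L_k + (λ_k/2)∑_{i<k} (α_i²/(λ_iγ_i))‖∇f(x_{i+1})‖² ≤ λ_k L₀`. -/
theorem semi_implicit_convergence
    {V : Type*} [NormedAddCommGroup V] [InnerProductSpace ℝ V] [CompleteSpace V]
    (μ : ℝ) (hμ : 0 ≤ μ) (f : V → ℝ) (f' : V → V)
    (hdiff : ∀ z, HasGradientAt f (f' z) z)
    (hconv : ∀ z w : V, f z - f w - ⟪f' w, z - w⟫ ≥ μ / 2 * ‖z - w‖ ^ 2)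
    (xstar : V) (hmin : ∀ z, f xstar ≤ f z)
    (x v : ℕ → V) (γ α β lam : ℕ → ℝ)
    (hγ0 : 0 < γ 0) (hα : ∀ k, 0 < α k) (hβ : ∀ k, β k = α k / γ k)
    (h1 : ∀ k, (α k)⁻¹ • (x (k + 1) - x k)
        = v k - x (k + 1) - β k • f' (x (k + 1)))
    (h2 : ∀ k, (α k)⁻¹ • (v (k + 1) - v k)
        = (μ / γ k) • (x (k + 1) - v (k + 1)) - (1 / γ k) • f' (x (k + 1)))
    (h3 : ∀ k, (γ (k + 1) - γ k) / α k = μ - γ (k + 1))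
    (hlam : ∀ k, lam k = ∏ i ∈ Finset.range k, (1 + α i)⁻¹)
    (k : ℕ) :
    (f (x k) - f xstar + γ k / 2 * ‖v k - xstar‖ ^ 2)
        + lam k / 2 * ∑ i ∈ Finset.range k,
            ((α i) ^ 2 / (lam i * γ i)) * ‖f' (x (i + 1))‖ ^ 2
      ≤ lam k * (f (x 0) - f xstar + γ 0 / 2 * ‖v 0 - xstar‖ ^ 2) := by
  have hγrec : ∀ k, γ (k+1) * (1 + α k) = γ k + α k * μ := by
    intro k
    have h := h3 k
    have ha := (hα k).ne'
    field_simp at h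
    linarith
  have hγpos : ∀ k, 0 < γ k := by
    intro k
    induction k with
    | zero => exact hγ0
    | succ k ih =>
      have h1a : (0:ℝ) < 1 + α k := by linarith [hα k]
      have h : γ (k+1) = (γ k + α k * μ)/(1 + α k) := by
        rw [eq_div_iff h1a.ne']; exact hγrec k
      rw [h]
      exact div_pos (by nlinarith [mul_nonneg (hα k).le hμ]) h1a
  have hlampos : ∀ k, 0 < lam k := by
    intro k
    rw [hlam k]
    exact Finset.prod_pos fun i _ => by have := hα i; positivity
  have hlrec : ∀ k, lam (k+1) = lam k * (1 + α k)⁻¹ := by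
    intro k
    rw [hlam (k+1), hlam k, Finset.prod_range_succ]
  have hx : ∀ k, γ k • (x (k+1) - x k)
      = (α k * γ k) • (v k - x (k+1)) - (α k)^2 • f' (x (k+1)) := by
    intro k
    have h := h1 k
    rw [hβ] at h
    have c1 : (α k * γ k) * (α k)⁻¹ = γ k := by
      field_simp [(hα k).ne']
      try ring
    have c2 : (α k * γ k) * (α k / γ k) = (α k)^2 := by
      field_simp [(hγpos k).ne']
      try ring
    have h2' : (α k * γ k) • ((α k)⁻¹ • (x (k+1) - x k))
        = (α k * γ k) • (v k - x (k+1) - (α k / γ k) • f' (x (k+1))) := by rw [h]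
    rw [smul_smul, c1] at h2'
    rw [h2', smul_sub (α k * γ k) (v k - x (k+1)), smul_smul, c2]
  have hv : ∀ k, (γ k + α k * μ) • (v (k+1) - xstar)
      = γ k • (v k - xstar) + (α k * μ) • (x (k+1) - xstar)
        - α k • f' (x (k+1)) := by
    intro k
    have h := h2 k
    have c1 : (α k * γ k) * (α k)⁻¹ = γ k := by
      field_simp [(hα k).ne']
      try ring
    have c2 : (α k * γ k) * (μ / γ k) = α k * μ := by
      field_simp [(hγpos k).ne']
      try ring
    have c3 : (α k * γ k) * (1 / γ k) = α k := by
      field_simp [(hγpos k).ne']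
    have h2' : (α k * γ k) • ((α k)⁻¹ • (v (k+1) - v k))
        = (α k * γ k) • ((μ / γ k) • (x (k+1) - v (k+1))
            - (1 / γ k) • f' (x (k+1))) := by rw [h]
    rw [smul_smul, c1] at h2'
    rw [smul_sub (α k * γ k) ((μ / γ k) • (x (k+1) - v (k+1)))] at h2'
    rw [smul_smul, smul_smul, c2, c3] at h2'
    linear_combination (norm := module) h2'
  induction k with
  | zero =>
    rw [hlam 0]
    simp
  | succ k ih =>
    have hapos := hα k
    have hγk := hγpos k
    have h1a : (0:ℝ) < 1 + α k := by linarith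
    have hlk := hlampos k
    set a := α k with hak
    set fp := f (x (k+1)) with hfp
    set fs := f xstar with hfs
    set fx := f (x k) with hfx
    set Wsq := ‖v (k+1) - xstar‖^2 with hWsq
    set A := ‖v k - xstar‖^2 with hA
    set C := ‖f' (x (k+1))‖^2 with hC
    set L0 := f (x 0) - fs + γ 0/2*‖v 0 - xstar‖^2 with hL0
    set S := ∑ i ∈ Finset.range k,
        ((α i) ^ 2 / (lam i * γ i)) * ‖f' (x (i + 1))‖ ^ 2 with hS
    have SL := step_lemma μ a (γ k) hμ hapos hγk f f' hconv xstar (x k) (x (k+1))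
      (v k) (v (k+1)) (hx k) (hv k)
    have hL' : (1+a) * (fp - fs + γ (k+1)/2 * Wsq)
        = (1+a)*(fp - fs) + (γ k + a*μ)/2 * Wsq := by
      linear_combination (Wsq/2) * (hγrec k)
    have cpos : (0:ℝ) < 2*(γ k + a*μ)*a*(γ k)^2 := by positivity
    have e1' : 2*(γ k + a*μ)*a*(γ k)^2 * ((1+a)*(fp - fs) + (γ k + a*μ)/2 * Wsq
          + a^2/(2*γ k)*C)
        = 2*(γ k + a*μ)*a*(γ k)^2*(1+a)*(fp - fs)
          + a*(γ k)^2*((γ k + a*μ)^2*Wsq) + (γ k + a*μ)*a^3*(γ k)*C := by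
      field_simp
    have e2' : 2*(γ k + a*μ)*a*(γ k)^2 * (fx - fs + γ k/2*A)
        = 2*(γ k + a*μ)*a*(γ k)^2*(fx - fs) + (γ k + a*μ)*a*(γ k)^3*A := by
      ring
    have stepX : (1+a)*(fp - fs) + (γ k + a*μ)/2 * Wsq + a^2/(2*γ k)*C
        ≤ fx - fs + γ k/2*A := by
      have h := SL
      rw [← e1', ← e2'] at h
      exact le_of_mul_le_mul_left h cpos
    have stepfin : (1+a) * (fp - fs + γ (k+1)/2 * Wsq) + a^2/(2*γ k)*C
        ≤ fx - fs + γ k/2*A := by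
      rw [hL']; exact stepX
    rw [Finset.sum_range_succ]
    have q1 : ((fp - fs + γ (k+1)/2 * Wsq)
          + lam (k+1)/2 * (S + a^2/(lam k * γ k)*C)) * (1+a)
        = (1+a) * (fp - fs + γ (k+1)/2 * Wsq) + lam k/2 * S + a^2/(2*γ k)*C := by
      rw [hlrec k, ← hak]
      field_simp
      ring
    have q2 : lam (k+1) * L0 * (1+a) = lam k * L0 := by
      rw [hlrec k, ← hak]
      field_simp
    have big : ((fp - fs + γ (k+1)/2 * Wsq)
          + lam (k+1)/2 * (S + a^2/(lam k * γ k)*C)) * (1+a)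
        ≤ lam (k+1) * L0 * (1+a) := by
      rw [q1, q2]
      linarith [stepfin, ih]
    exact le_of_mul_le_mul_right big h1a
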